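/- Let ε ∈ (0,1), let Σ, Σ̂ ∈ ℝ^{d×d} be symmetric positive definite, and let u*, û ∈ ℝ^d satisfy ‖Σ^{1/2} u*‖ = 1 and ‖Σ̂^{1/2} û‖ = 1. If ‖Σ^{1/2} u* − Σ̂^{1/2} û‖² ≤ ε/8 and ‖I − Σ^{1/2} Σ̂^{-1/2}‖ ≤ √ε / 4, then u*ᵀ Σ û / ‖Σ^{1/2} û‖ ≥ 1 − ε. -/

import Mathlib

open Matrix Finset

/-- Euclidean norm of a vector in `ℝ^d`. -/
noncomputable def vnorm {n : Type*} [Fintype n] (x : n → ℝ) : ℝ := Real.sqrt (x ⬝ᵥ x)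

/-- Spectral (operator) norm of a real matrix: the supremum of `‖A x‖` over unit vectors `x`. -/
noncomputable def specNorm {m n : Type*} [Fintype m] [Fintype n] (A : Matrix m n ℝ) : ℝ :=
  sSup {c : ℝ | ∃ x : n → ℝ, vnorm x = 1 ∧ c = vnorm (A.mulVec x)}

/-- The positive semidefinite square root of a positive semidefinite matrix (the definition
`Matrix.PosSemidef.sqrt` of the older Mathlib, since removed; here only for real matrices). -/
noncomputable def Matrix.PosSemidef.sqrt {n : Type*} [Fintype n] [DecidableEq n]
    {A : Matrix n n ℝ} (hA : A.PosSemidef) : Matrix n n ℝ :=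
  hA.isHermitian.eigenvectorUnitary.1 * diagonal ((↑) ∘ (√·) ∘ hA.isHermitian.eigenvalues) *
    (star hA.isHermitian.eigenvectorUnitary : Matrix n n ℝ)

lemma Matrix.PosSemidef.sqrt_mul_self {n : Type*} [Fintype n] [DecidableEq n]
    {A : Matrix n n ℝ} (hA : A.PosSemidef) : hA.sqrt * hA.sqrt = A := by
  have hU := Matrix.UnitaryGroup.star_mul_self hA.isHermitian.eigenvectorUnitary
  have hsp := hA.isHermitian.spectral_theorem
  rw [Unitary.conjStarAlgAut_apply] at hsp
  unfold Matrix.PosSemidef.sqrt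
  conv_rhs => rw [hsp]
  simp only [Matrix.mul_assoc]
  rw [← Matrix.mul_assoc (star _ : Matrix n n ℝ) _ _, hU, Matrix.one_mul, ← Matrix.mul_assoc (diagonal _) _ _,
    diagonal_mul_diagonal]
  congr 3
  funext i
  simp [Real.mul_self_sqrt (hA.eigenvalues_nonneg i)]

lemma Matrix.PosSemidef.isHermitian_sqrt {n : Type*} [Fintype n] [DecidableEq n]
    {A : Matrix n n ℝ} (hA : A.PosSemidef) : hA.sqrt.IsHermitian := by
  unfold Matrix.PosSemidef.sqrt Matrix.IsHermitian
  simp [conjTranspose_mul, Matrix.mul_assoc, star_eq_conjTranspose, conjTranspose_eq_transpose_of_trivial]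

lemma WithLp.equiv_symm_sub {n : Type*} (x y : n → ℝ) :
    (WithLp.equiv 2 (n → ℝ)).symm (x - y) =
      (WithLp.equiv 2 (n → ℝ)).symm x - (WithLp.equiv 2 (n → ℝ)).symm y := rfl

lemma vnorm_eq_norm {n : Type*} [Fintype n] (x : n → ℝ) :
    vnorm x = ‖(WithLp.equiv 2 (n → ℝ)).symm x‖ := by
  rw [vnorm, EuclideanSpace.norm_eq]
  congr 1
  refine Finset.sum_congr rfl fun i _ => ?_
  simp [Real.norm_eq_abs, sq_abs, sq, dotProduct]

lemma dot_eq_inner {n : Type*} [Fintype n] (x y : n → ℝ) :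
    x ⬝ᵥ y = inner ℝ ((WithLp.equiv 2 (n → ℝ)).symm x) ((WithLp.equiv 2 (n → ℝ)).symm y) := by
  simp [dotProduct, PiLp.inner_apply, RCLike.inner_apply, mul_comm]

open scoped Matrix.Norms.L2Operator in
lemma le_specNorm {m n : Type*} [Fintype m] [Fintype n] [DecidableEq m] [DecidableEq n]
    (A : Matrix m n ℝ) (x : n → ℝ) (hx : vnorm x = 1) :
    vnorm (A.mulVec x) ≤ specNorm A := by
  apply le_csSup
  · refine ⟨‖A‖, ?_⟩
    rintro c ⟨y, hy, rfl⟩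
    have h := A.l2_opNorm_mulVec ((WithLp.equiv 2 (n → ℝ)).symm y)
    rw [vnorm_eq_norm]
    calc ‖(WithLp.equiv 2 (m → ℝ)).symm (A.mulVec y)‖
        ≤ ‖A‖ * ‖(WithLp.equiv 2 (n → ℝ)).symm y‖ := h
      _ = ‖A‖ := by rw [← vnorm_eq_norm, hy, mul_one]
  · exact ⟨x, hx, rfl⟩

set_option maxHeartbeats 1000000 in
/-- fixing the normalization: if `‖Σ^{1/2}u* − Σ̂^{1/2}û‖² ≤ ε/8` and
`‖I − Σ^{1/2}Σ̂^{-1/2}‖ ≤ √ε/4`, then the alignment `u*ᵀΣû/‖Σ^{1/2}û‖` is at least `1 − ε`. -/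
theorem stmt_12 {d : ℕ} (ε : ℝ) (hε : ε ∈ Set.Ioo (0 : ℝ) 1)
    (S Sh : Matrix (Fin d) (Fin d) ℝ) (hS : S.PosDef) (hSh : Sh.PosDef)
    (ustar uhat : Fin d → ℝ)
    (hus : vnorm (hS.posSemidef.sqrt.mulVec ustar) = 1)
    (huh : vnorm (hSh.posSemidef.sqrt.mulVec uhat) = 1)
    (h1 : vnorm (hS.posSemidef.sqrt.mulVec ustar - hSh.posSemidef.sqrt.mulVec uhat) ^ 2 ≤ ε / 8)
    (h2 : specNorm (1 - hS.posSemidef.sqrt * (hSh.posSemidef.sqrt)⁻¹) ≤ Real.sqrt ε / 4) :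
    ustar ⬝ᵥ S.mulVec uhat / vnorm (hS.posSemidef.sqrt.mulVec uhat) ≥ 1 - ε := by
  obtain ⟨hε0, hε1⟩ := hε
  set A := hS.posSemidef.sqrt with hAdef
  set B := hSh.posSemidef.sqrt with hBdef
  -- symmetry of A
  have hAsymm : Aᵀ = A := by
    have h := hS.posSemidef.isHermitian_sqrt
    simpa [Matrix.IsHermitian, conjTranspose_eq_transpose_of_trivial] using h
  -- B is invertible
  have hdetB : (det B) * (det B) = det Sh := by
    rw [← det_mul, hSh.posSemidef.sqrt_mul_self]
  have hdetB0 : det B ≠ 0 := by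
    intro h
    rw [h, mul_zero] at hdetB
    exact hSh.det_pos.ne' hdetB.symm
  have hBinv : B⁻¹ * B = 1 := Matrix.nonsing_inv_mul B (isUnit_iff_ne_zero.mpr hdetB0)
  -- c = T b
  have hc : (A * B⁻¹) *ᵥ (B *ᵥ uhat) = A *ᵥ uhat := by
    rw [mulVec_mulVec, Matrix.mul_assoc, hBinv, Matrix.mul_one]
  have hbc : (1 - A * B⁻¹) *ᵥ (B *ᵥ uhat) = B *ᵥ uhat - A *ᵥ uhat := by
    rw [sub_mulVec, one_mulVec, hc]
  have hwv : vnorm (B *ᵥ uhat - A *ᵥ uhat) ≤ Real.sqrt ε / 4 := by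
    have h := le_specNorm (1 - A * B⁻¹) (B *ᵥ uhat) huh
    rw [hbc] at h
    exact h.trans h2
  -- numerator
  have hnum : ustar ⬝ᵥ S *ᵥ uhat = (A *ᵥ ustar) ⬝ᵥ (A *ᵥ uhat) := by
    conv_lhs => rw [← hS.posSemidef.sqrt_mul_self, ← hAdef, ← mulVec_mulVec,
      dotProduct_mulVec, ← Matrix.mulVec_transpose, hAsymm]
  -- move to Euclidean space
  set a' := (WithLp.equiv 2 (Fin d → ℝ)).symm (A *ᵥ ustar) with ha'
  set b' := (WithLp.equiv 2 (Fin d → ℝ)).symm (B *ᵥ uhat) with hb'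
  set c' := (WithLp.equiv 2 (Fin d → ℝ)).symm (A *ᵥ uhat) with hc'
  have hna : ‖a'‖ = 1 := by rw [← vnorm_eq_norm]; exact hus
  have hnb : ‖b'‖ = 1 := by rw [← vnorm_eq_norm]; exact huh
  have hab : ‖a' - b'‖ ^ 2 ≤ ε / 8 := by
    rw [← WithLp.equiv_symm_sub, ← vnorm_eq_norm]; exact h1
  have hwn : ‖b' - c'‖ ≤ Real.sqrt ε / 4 := by
    rw [← WithLp.equiv_symm_sub, ← vnorm_eq_norm]; exact hwv
  rw [hnum, dot_eq_inner, vnorm_eq_norm, ← ha', ← hc']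
  clear_value a' b' c'
  clear ha' hb' hc' hnum hwv hbc hc hBinv hdetB0 hdetB hAsymm h2 h1 huh hus hAdef hBdef A B hS hSh S Sh ustar uhat
  -- scalar computation
  set g := ‖a' - b'‖ with hg
  set w := ‖b' - c'‖ with hwdef
  set s := (inner ℝ b' (b' - c') : ℝ) with hs
  set t := (inner ℝ (a' - b') (b' - c') : ℝ) with ht
  have hg0 : 0 ≤ g := norm_nonneg _
  have hw0 : 0 ≤ w := norm_nonneg _
  have hsq : Real.sqrt ε ^ 2 = ε := Real.sq_sqrt hε0.le
  have hsqrt_nn : 0 ≤ Real.sqrt ε := Real.sqrt_nonneg ε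
  have hsqrt_le : Real.sqrt ε ≤ 1 := by
    nlinarith [hsq, hsqrt_nn]
  have hip : (inner ℝ a' b' : ℝ) = 1 - g ^ 2 / 2 := by
    have h := norm_sub_sq_real a' b'
    rw [hna, hnb, ← hg] at h
    linarith
  have hN : (inner ℝ a' c' : ℝ) = (1 - g ^ 2 / 2) - s - t := by
    have h1' : (inner ℝ a' (b' - c') : ℝ) = inner ℝ a' b' - inner ℝ a' c' := inner_sub_right _ _ _
    have h2' : (inner ℝ a' (b' - c') : ℝ) = inner ℝ (a' - b') (b' - c') + inner ℝ b' (b' - c') := by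
      rw [inner_sub_left]; ring
    rw [← hip]
    rw [h2', ← hs, ← ht] at h1'
    linarith
  have hD2 : ‖c'‖ ^ 2 = 1 - 2 * s + w ^ 2 := by
    have h := norm_sub_sq_real b' (b' - c')
    rw [sub_sub_cancel, hnb, ← hs, ← hwdef] at h
    rw [h]; ring
  have hs_abs : |s| ≤ w := by
    calc |s| ≤ ‖b'‖ * ‖b' - c'‖ := abs_real_inner_le_norm _ _
      _ = w := by rw [hnb, one_mul]
  have hs_le : s ≤ w := (le_abs_self s).trans hs_abs
  have hs_ge : -w ≤ s := by
    have := (abs_le.mp hs_abs).1; linarith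
  have hg_le : g ≤ Real.sqrt ε := by
    nlinarith [hab, hsq, hg0, hsqrt_nn]
  have ht_le : t ≤ ε / 4 := by
    have h := real_inner_le_norm (a' - b') (b' - c')
    have h2' : g * w ≤ Real.sqrt ε * (Real.sqrt ε / 4) :=
      mul_le_mul hg_le hwn hw0 hsqrt_nn
    nlinarith [h, h2', hsq]
  have hD0 : 0 ≤ ‖c'‖ := norm_nonneg _
  have hw_le : w ≤ 1 / 4 := by nlinarith [hwn, hsqrt_le]
  have hr0 : (0:ℝ) ≤ 1 - s + w ^ 2 / 2 := by nlinarith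
  have hD2le : ‖c'‖ ^ 2 ≤ (1 - s + w ^ 2 / 2) ^ 2 := by
    nlinarith [hD2, sq_nonneg (s - w ^ 2 / 2)]
  have hDle : ‖c'‖ ≤ 1 - s + w ^ 2 / 2 := by
    have h := Real.sqrt_le_sqrt hD2le
    rwa [Real.sqrt_sq hD0, Real.sqrt_sq hr0] at h
  have hD2pos : 0 < ‖c'‖ ^ 2 := by rw [hD2]; nlinarith [sq_nonneg w]
  have hDpos : 0 < ‖c'‖ := by
    rcases hD0.lt_or_eq with h | h
    · exact h
    · exfalso; rw [← h] at hD2pos; simp at hD2pos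
  rw [ge_iff_le, le_div_iff₀ hDpos, hN]
  have h3 : (1 - ε) * ‖c'‖ ≤ (1 - ε) * (1 - s + w ^ 2 / 2) :=
    mul_le_mul_of_nonneg_left hDle (by linarith)
  have hεs : ε * s ≤ ε * (Real.sqrt ε / 4) :=
    mul_le_mul_of_nonneg_left (hs_le.trans hwn) hε0.le
  have hεs2 : ε * s ≤ ε / 4 := by nlinarith [hεs, hsqrt_le, hε0.le]
  have hw2 : w ^ 2 ≤ ε / 16 := by nlinarith [hwn, hw0, hsq]
  have hεw : 0 ≤ ε * w ^ 2 := mul_nonneg hε0.le (sq_nonneg w)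
  have key : (1 - ε) * (1 - s + w ^ 2 / 2) ≤ 1 - g ^ 2 / 2 - s - t := by
    nlinarith [hab, ht_le, hw2, hεs2, hεw]
  linarith [h3, key]
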